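/- Let c ∈ ℝ and let γ : I → ℂ∖{0} be a twice-differentiable unit-speed curve with Re(γ(s)²) = c for all s ∈ I. Then γ''(s) = (γ(s) − ⟨γ(s),γ'(s)⟩·γ'(s))/|γ(s)|² for all s, i.e., κ = γ⊥/|γ|². Hence the equivariant Lagrangian defined by γ is minimal (its mean curvature vanishes), and it is a stationary solution of equivariant Lagrangian mean curvature flow; for c > 0 these are the Lawlor necks. -/

import Mathlib

/-- A real function constant on an open set has derivative zero there. -/
lemma deriv_zero_of_const_on {I : Set ℝ} (hI : IsOpen I) {f : ℝ → ℝ} {c d s : ℝ}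
    (hs : s ∈ I) (hf : ∀ t ∈ I, f t = c) (hd : HasDerivAt f d s) : d = 0 := by
  have h0 : HasDerivAt f 0 s := by
    have hcst : HasDerivAt (fun _ : ℝ => c) 0 s := hasDerivAt_const s c
    refine hcst.congr_of_eventuallyEq ?_
    filter_upwards [hI.mem_nhds hs] with t ht using hf t ht
  exact hd.unique h0

/-- Let `γ : I → ℂ∖{0}` be a twice-differentiable unit-speed curve with `Re(γ²) = c`
constant.  Then `γ'' = (γ − ⟨γ,γ'⟩·γ')/|γ|²`, i.e. `κ = γ⊥/|γ|²` where `κ = γ''` and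
`γ⊥ = γ − ⟨γ,γ'⟩·γ'` with `⟨a,b⟩ = Re(a·conj b)`.  Hence the equivariant Lagrangian defined
by `γ` is minimal and a stationary solution of equivariant Lagrangian mean curvature flow;
for `c > 0` these are the Lawlor necks. -/
theorem lawlor_neck_curve_is_minimal (I : Set ℝ) (hI : IsOpen I) (c : ℝ)
    (γ γ' γ'' : ℝ → ℂ)
    (hd1 : ∀ s ∈ I, HasDerivAt γ (γ' s) s)
    (hd2 : ∀ s ∈ I, HasDerivAt γ' (γ'' s) s)
    (hunit : ∀ s ∈ I, ‖γ' s‖ = 1)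
    (hne : ∀ s ∈ I, γ s ≠ 0)
    (hc : ∀ s ∈ I, ((γ s) ^ 2).re = c) :
    ∀ s ∈ I,
      γ'' s = (γ s - ((γ s * star (γ' s)).re : ℝ) • γ' s) / (Complex.normSq (γ s) : ℂ) := by
  -- real components of γ, γ', γ'' as functions
  have hre : ∀ t ∈ I, HasDerivAt (fun u => (γ u).re) ((γ' t).re) t := fun t ht =>
    Complex.reCLM.hasFDerivAt.comp_hasDerivAt t (hd1 t ht)
  have him : ∀ t ∈ I, HasDerivAt (fun u => (γ u).im) ((γ' t).im) t := fun t ht =>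
    Complex.imCLM.hasFDerivAt.comp_hasDerivAt t (hd1 t ht)
  have hre' : ∀ t ∈ I, HasDerivAt (fun u => (γ' u).re) ((γ'' t).re) t := fun t ht =>
    Complex.reCLM.hasFDerivAt.comp_hasDerivAt t (hd2 t ht)
  have him' : ∀ t ∈ I, HasDerivAt (fun u => (γ' u).im) ((γ'' t).im) t := fun t ht =>
    Complex.imCLM.hasFDerivAt.comp_hasDerivAt t (hd2 t ht)
  -- First relation: Re(γ γ') = 0 on I (derivative of Re(γ²)/2)
  have h1 : ∀ t ∈ I, (γ t).re * (γ' t).re - (γ t).im * (γ' t).im = 0 := by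
    intro t ht
    have hF : HasDerivAt (fun u => (γ u).re ^ 2 - (γ u).im ^ 2)
        (2 * (γ t).re ^ 1 * (γ' t).re - 2 * (γ t).im ^ 1 * (γ' t).im) t :=
      ((hre t ht).pow 2).sub ((him t ht).pow 2)
    have hfc : ∀ u ∈ I, (γ u).re ^ 2 - (γ u).im ^ 2 = c := by
      intro u hu
      have := hc u hu
      simpa [pow_two, Complex.mul_re] using this
    have h0 := deriv_zero_of_const_on hI ht hfc hF
    nlinarith [h0]
  intro s hs
  -- Second relation: differentiate Re(γ γ') = 0
  have h2 : (γ' s).re ^ 2 - (γ' s).im ^ 2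
      + ((γ s).re * (γ'' s).re - (γ s).im * (γ'' s).im) = 0 := by
    have hF : HasDerivAt
        (fun u => (γ u).re * (γ' u).re - (γ u).im * (γ' u).im)
        (((γ' s).re * (γ' s).re + (γ s).re * (γ'' s).re)
          - ((γ' s).im * (γ' s).im + (γ s).im * (γ'' s).im)) s :=
      ((hre s hs).mul (hre' s hs)).sub ((him s hs).mul (him' s hs))
    have h0 := deriv_zero_of_const_on hI hs h1 hF
    nlinarith [h0]
  -- Third relation: differentiate |γ'|² = 1
  have h3 : (γ' s).re * (γ'' s).re + (γ' s).im * (γ'' s).im = 0 := by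
    have hF : HasDerivAt (fun u => (γ' u).re ^ 2 + (γ' u).im ^ 2)
        (2 * (γ' s).re ^ 1 * (γ'' s).re + 2 * (γ' s).im ^ 1 * (γ'' s).im) s :=
      ((hre' s hs).pow 2).add ((him' s hs).pow 2)
    have hfc : ∀ u ∈ I, (γ' u).re ^ 2 + (γ' u).im ^ 2 = 1 := by
      intro u hu
      have h := hunit u hu
      have := Complex.normSq_eq_norm_sq (γ' u)
      rw [h] at this
      simpa [Complex.normSq_apply, pow_two] using this
    have h0 := deriv_zero_of_const_on hI hs hfc hF
    nlinarith [h0]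
  -- unit speed at s
  have h4 : (γ' s).re ^ 2 + (γ' s).im ^ 2 = 1 := by
    have h := hunit s hs
    have := Complex.normSq_eq_norm_sq (γ' s)
    rw [h] at this
    simpa [Complex.normSq_apply, pow_two] using this
  -- abbreviations
  set x := (γ s).re with hxdef
  set y := (γ s).im with hydef
  set p := (γ' s).re with hpdef
  set q := (γ' s).im with hqdef
  set r := (γ'' s).re with hrdef
  set z := (γ'' s).im with hzdef
  have e1 : x * p - y * q = 0 := h1 s hs
  -- d = x q + y p
  have hx : x = q * (x * q + y * p) := by linear_combination p * e1 - x * h4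
  have hy : y = p * (x * q + y * p) := by linear_combination (-q) * e1 - y * h4
  have hdne : x * q + y * p ≠ 0 := by
    intro hd0
    have hx0 : x = 0 := by rw [hx, hd0]; ring
    have hy0 : y = 0 := by rw [hy, hd0]; ring
    exact hne s hs (Complex.ext hx0 hy0)
  set d := x * q + y * p with hddef
  have h2' : p ^ 2 - q ^ 2 + d * (q * r - p * z) = 0 := by
    linear_combination h2 - r * hx + z * hy
  have krd : r * d = q * q ^ 2 - q * p ^ 2 := by
    linear_combination q * h2' + d * p * h3 - d * r * h4
  have ksd : z * d = p ^ 3 - p * q ^ 2 := by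
    linear_combination (-p) * h2' + d * q * h3 - d * z * h4
  have hd2sq : x ^ 2 + y ^ 2 = d ^ 2 := by
    linear_combination (x + q * d) * hx + (y + p * d) * hy + d ^ 2 * h4
  have hnsq : Complex.normSq (γ s) = x ^ 2 + y ^ 2 := by
    simp [Complex.normSq_apply, pow_two]
    rfl
  have hk : ((Complex.normSq (γ s) : ℝ) : ℂ) ≠ 0 := by
    simp only [ne_eq, Complex.ofReal_eq_zero]
    exact fun h => hne s hs (Complex.normSq_eq_zero.mp h)
  rw [eq_div_iff hk]
  have hstar : (γ s * star (γ' s)).re = x * p + y * q := by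
    simp [Complex.mul_re, Complex.conj_re, Complex.conj_im]
    rfl
  apply Complex.ext
  · simp only [Complex.mul_re, Complex.ofReal_re, Complex.ofReal_im, Complex.sub_re,
      Complex.real_smul, Complex.mul_im, hstar, hnsq]
    ring_nf
    linear_combination r * hd2sq + d * krd + (p ^ 2 - 1) * hx + p * q * hy + q * d * h4
  · simp only [Complex.mul_re, Complex.ofReal_re, Complex.ofReal_im, Complex.sub_im,
      Complex.real_smul, Complex.mul_im, hstar, hnsq]
    ring_nf
    linear_combination z * hd2sq + d * ksd + (q ^ 2 - 1) * hy + p * q * hx + p * d * h4
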